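/- Let (M,d) be a proper metric space and M^ν its Higson compactification. A point p ∈ M^ν lies in M if and only if the singleton {p} is a G_δ subset of M^ν. -/

import Mathlib

/-- A bounded continuous function `f` on a metric space `M` is a Higson function if for every
`r > 0` its `r`-expansion `∇_r f (x) = sup {|f x − f y| : dist x y ≤ r}` vanishes at
infinity. -/
def IsHigsonFunction {M : Type*} [MetricSpace M] (f : M → ℂ) : Prop :=
  ∀ r : ℝ, 0 < r → ∀ ε : ℝ, 0 < ε → ∃ K : Set M, IsCompact K ∧
    ∀ x ∉ K, ∀ y : M, dist x y ≤ r → dist (f x) (f y) < ε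

/-- `(X, e)` is the Higson compactification of `M`: a compactification of `M` such that the
bounded continuous functions on `M` extending continuously to `X` are exactly the continuous
Higson functions. -/
structure IsHigsonCompactification (M : Type*) [MetricSpace M] (X : Type*)
    [TopologicalSpace X] [CompactSpace X] [T2Space X] (e : M → X) : Prop where
  embedding : Topology.IsEmbedding e
  dense : DenseRange e
  higson : ∀ f : BoundedContinuousFunction M ℂ,
    (∃ g : C(X, ℂ), ∀ x : M, g (e x) = f x) ↔ IsHigsonFunction f

open Metric Set Filter Topology

lemma sqrt_le_of_sq {a b : ℝ} (hb : 0 ≤ b) (h : a ≤ b ^ 2) : Real.sqrt a ≤ b :=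
  (Real.sqrt_le_sqrt h).trans_eq (Real.sqrt_sq hb)

/-- The key analytic estimate for the capped radial function. -/
lemma radial_key (A : Set ℝ) {t s : ℝ} (ht : 1 ≤ t) (hs : 1 ≤ s) :
    |min (Real.sqrt t) (infDist t A) / Real.sqrt t
      - min (Real.sqrt s) (infDist s A) / Real.sqrt s| ≤ 2 * |t - s| / Real.sqrt t := by
  set a := Real.sqrt t with ha
  set b := Real.sqrt s with hb
  have ha1 : 1 ≤ a := by
    rw [ha, show (1:ℝ) = Real.sqrt 1 by simp]; exact Real.sqrt_le_sqrt ht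
  have hb1 : 1 ≤ b := by
    rw [hb, show (1:ℝ) = Real.sqrt 1 by simp]; exact Real.sqrt_le_sqrt hs
  have ha0 : 0 < a := lt_of_lt_of_le one_pos ha1
  have hb0 : 0 < b := lt_of_lt_of_le one_pos hb1
  have hasq : a ^ 2 = t := Real.sq_sqrt (by linarith)
  have hbsq : b ^ 2 = s := Real.sq_sqrt (by linarith)
  set Et := min a (infDist t A) with hEt
  set Es := min b (infDist s A) with hEs
  have hab : |a - b| ≤ |t - s| := by
    have habm : |a - b| * (a + b) = |t - s| := by
      rw [← abs_of_pos (show (0:ℝ) < a + b by linarith), ← abs_mul]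
      congr 1; nlinarith
    nlinarith [abs_nonneg (a - b)]
  have hEtd : |Et - Es| ≤ |t - s| := by
    have h1 : |Et - Es| ≤ max |a - b| |infDist t A - infDist s A| :=
      abs_min_sub_min_le_max a (infDist t A) b (infDist s A)
    have hinf : |infDist t A - infDist s A| ≤ |t - s| := by
      rw [abs_sub_le_iff]
      constructor
      · have h3 := infDist_le_infDist_add_dist (x := t) (y := s) (s := A)
        rw [Real.dist_eq] at h3
        have := abs_sub_comm t s
        linarith [le_abs_self (t - s), neg_abs_le (t - s), h3, abs_sub_comm t s ▸ h3]
      · have h3 := infDist_le_infDist_add_dist (x := s) (y := t) (s := A)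
        rw [Real.dist_eq] at h3
        have h4 : |s - t| = |t - s| := abs_sub_comm s t
        linarith
    calc |Et - Es| ≤ max |a - b| |infDist t A - infDist s A| := h1
      _ ≤ |t - s| := max_le hab hinf
  have hEs0 : 0 ≤ Es := le_min (le_of_lt hb0) infDist_nonneg
  have hEsb : Es ≤ b := min_le_left _ _
  have key : Et / a - Es / b = (Et - Es) / a + Es * (b - a) / (a * b) := by
    field_simp
    ring
  rw [key]
  calc |(Et - Es) / a + Es * (b - a) / (a * b)|
      ≤ |(Et - Es) / a| + |Es * (b - a) / (a * b)| := abs_add_le _ _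
    _ = |Et - Es| / a + Es * |b - a| / (a * b) := by
        rw [abs_div, abs_of_pos ha0, abs_div, abs_mul, abs_of_nonneg hEs0,
          abs_of_pos (mul_pos ha0 hb0)]
    _ ≤ |t - s| / a + b * |t - s| / (a * b) := by
        have h5 : Es * |b - a| ≤ b * |t - s| := by
          rw [abs_sub_comm]
          exact mul_le_mul hEsb hab (abs_nonneg _) hb0.le
        have h6 : |Et - Es| / a ≤ |t - s| / a := by gcongr
        have h7 : Es * |b - a| / (a * b) ≤ b * |t - s| / (a * b) := by gcongr
        linarith
    _ = 2 * |t - s| / a := by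
        field_simp
        ring

/-- A locally compact dense subspace of a Hausdorff space is open. -/
lemma isOpen_range_of_dense {M X : Type*} [MetricSpace M] [ProperSpace M] [TopologicalSpace X]
    [T2Space X] {e : M → X} (hemb : Topology.IsEmbedding e) (hd : DenseRange e) :
    IsOpen (Set.range e) := by
  rw [isOpen_iff_forall_mem_open]
  rintro _ ⟨x, rfl⟩
  have hball : IsOpen (Metric.ball x 1) := isOpen_ball
  rw [hemb.eq_induced] at hball
  obtain ⟨V, hVopen, hVpre⟩ := isOpen_induced_iff.mp hball
  have himg : V ∩ Set.range e = e '' Metric.ball x 1 := by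
    ext z
    constructor
    · rintro ⟨hzV, y, rfl⟩
      have hy : y ∈ e ⁻¹' V := hzV
      rw [hVpre] at hy
      exact ⟨y, hy, rfl⟩
    · rintro ⟨y, hy, rfl⟩
      have hy' : y ∈ e ⁻¹' V := by rw [hVpre]; exact hy
      exact ⟨hy', y, rfl⟩
  have hVsub : V ⊆ Set.range e := by
    have h1 : V ⊆ closure (V ∩ Set.range e) := hd.open_subset_closure_inter hVopen
    have h2 : closure (e '' Metric.ball x 1) ⊆ e '' Metric.closedBall x 1 := by
      apply closure_minimal
      · exact Set.image_mono Metric.ball_subset_closedBall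
      · exact ((isCompact_closedBall x 1).image hemb.continuous).isClosed
    intro z hz
    have := h2 (by rw [← himg]; exact closure_mono (by rw [himg]) (h1 hz))
    exact Set.image_subset_range _ _ this
  refine ⟨V, hVsub, hVopen, ?_⟩
  have : x ∈ e ⁻¹' V := by rw [hVpre]; exact Metric.mem_ball_self one_pos
  exact this

/-- A Gδ point of a compact Hausdorff space has countably generated neighborhood filter. -/
lemma countable_basis_of_isGδ_singleton {X : Type*} [TopologicalSpace X] [CompactSpace X]
    [T2Space X] {p : X} (hGδ : IsGδ ({p} : Set X)) : (𝓝 p).IsCountablyGenerated := by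
  obtain ⟨f, hf1, -, -, hf01⟩ :=
    exists_continuous_one_zero_of_isCompact_of_isGδ isCompact_singleton hGδ isClosed_empty
      (Set.disjoint_empty _)
  have hfp : f p = 1 := by
    have : p ∈ f ⁻¹' {1} := by rw [← hf1]; rfl
    simpa using this
  have hbasis : (𝓝 p).HasBasis (fun _ : ℕ => True)
      (fun n => f ⁻¹' Set.Ioi (1 - 1 / (n + 1))) := by
    constructor
    intro W
    constructor
    · intro hW
      obtain ⟨V, hVW, hVopen, hpV⟩ := mem_nhds_iff.mp hW
      rcases Set.eq_empty_or_nonempty Vᶜ with hVc | hVc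
      · refine ⟨0, trivial, fun z _ => ?_⟩
        apply hVW
        by_contra hz
        exact absurd (Set.mem_compl hz) (by rw [hVc]; exact Set.notMem_empty z)
      · have hcomp : IsCompact Vᶜ := hVopen.isClosed_compl.isCompact
        obtain ⟨z, hzV, hzmax⟩ := hcomp.exists_isMaxOn hVc (f.continuous.continuousOn)
        have hz1 : f z < 1 := by
          rcases lt_or_eq_of_le (hf01 z).2 with h1 | h1
          · exact h1
          · exfalso
            have : z ∈ f ⁻¹' {1} := by simpa using h1
            rw [← hf1] at this
            rw [Set.mem_singleton_iff] at this
            subst this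
            exact hzV hpV
        obtain ⟨n, hn⟩ := exists_nat_one_div_lt (show (0:ℝ) < 1 - f z by linarith)
        refine ⟨n, trivial, fun w hw => ?_⟩
        apply hVW
        by_contra hwV
        have h2 : f w ≤ f z := hzmax (Set.mem_compl hwV)
        have h3 : (1 : ℝ) - 1 / (n + 1) < f w := hw
        have : (1:ℝ)/(n+1) < 1 - f z := hn
        linarith
    · rintro ⟨n, -, hn⟩
      refine Filter.mem_of_superset ?_ hn
      refine IsOpen.mem_nhds (isOpen_Ioi.preimage f.continuous) ?_
      simp only [Set.mem_preimage, hfp, Set.mem_Ioi]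
      have : (0:ℝ) < 1 / (n + 1) := by positivity
      linarith
  exact hbasis.isCountablyGenerated

/-- The capped radial function is a Higson function. -/
lemma isHigson_radial {M : Type*} [MetricSpace M] [ProperSpace M] (o : M) (A : Set ℝ) :
    IsHigsonFunction (fun z : M =>
      ((min (Real.sqrt (max 1 (dist o z))) (infDist (max 1 (dist o z)) A)
          / Real.sqrt (max 1 (dist o z)) : ℝ) : ℂ)) := by
  intro r hr ε hε
  refine ⟨Metric.closedBall o (max 1 ((2 * r / ε) ^ 2)), isCompact_closedBall _ _, ?_⟩
  intro x hx y hxy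
  set t := max 1 (dist o x) with htdef
  set s := max 1 (dist o y) with hsdef
  have ht1 : 1 ≤ t := le_max_left _ _
  have hs1 : 1 ≤ s := le_max_left _ _
  have hts : |t - s| ≤ r := by
    have h1 := abs_dist_sub_le x y o
    rw [dist_comm x o, dist_comm y o] at h1
    have h2 : |max (dist o x) 1 - max (dist o y) 1| ≤ |dist o x - dist o y| :=
      abs_max_sub_max_le_abs (dist o x) (dist o y) 1
    rw [max_comm (dist o x) 1, max_comm (dist o y) 1] at h2
    calc |t - s| ≤ |dist o x - dist o y| := h2
      _ ≤ dist x y := h1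
      _ ≤ r := hxy
  have htbig : (2 * r / ε) ^ 2 < t := by
    have : max 1 ((2 * r / ε) ^ 2) < dist o x := by
      rw [Metric.mem_closedBall, not_le, dist_comm] at hx
      exact hx
    calc (2 * r / ε) ^ 2 ≤ max 1 ((2 * r / ε) ^ 2) := le_max_right _ _
      _ < dist o x := this
      _ ≤ t := le_max_right _ _
  have hst0 : 0 < Real.sqrt t := Real.sqrt_pos.mpr (by linarith)
  have hsr : 2 * r / ε < Real.sqrt t := by
    have h0 : 0 ≤ 2 * r / ε := by positivity
    nlinarith [Real.sq_sqrt (show (0:ℝ) ≤ t by linarith), Real.sqrt_nonneg t]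
  have hdistC : dist
      (((min (Real.sqrt t) (infDist t A) / Real.sqrt t : ℝ) : ℂ))
      (((min (Real.sqrt s) (infDist s A) / Real.sqrt s : ℝ) : ℂ))
      = |min (Real.sqrt t) (infDist t A) / Real.sqrt t
          - min (Real.sqrt s) (infDist s A) / Real.sqrt s| := by
    rw [dist_eq_norm, ← Complex.ofReal_sub, Complex.norm_real, Real.norm_eq_abs]
  rw [hdistC]
  calc |min (Real.sqrt t) (infDist t A) / Real.sqrt t
        - min (Real.sqrt s) (infDist s A) / Real.sqrt s|
      ≤ 2 * |t - s| / Real.sqrt t := radial_key A ht1 hs1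
    _ ≤ 2 * r / Real.sqrt t := by gcongr
    _ < ε := by
        rw [div_lt_iff₀ hst0]
        calc 2 * r = (2 * r / ε) * ε := by field_simp
          _ < Real.sqrt t * ε := mul_lt_mul_of_pos_right hsr hε
          _ = ε * Real.sqrt t := mul_comm _ _
    

/-- A point `p` of the Higson compactification `M^ν` of a proper metric space `M` lies in `M`
if and only if `{p}` is a `G_δ` subset of `M^ν`. -/
theorem mem_of_isGδ_singleton {M : Type*} [MetricSpace M] [ProperSpace M]
    {X : Type*} [TopologicalSpace X] [CompactSpace X] [T2Space X] {e : M → X}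
    (h : IsHigsonCompactification M X e) (p : X) :
    p ∈ Set.range e ↔ IsGδ ({p} : Set X) := by
  constructor
  · rintro ⟨x, rfl⟩
    have hopen : IsOpen (Set.range e) := isOpen_range_of_dense h.embedding h.dense
    have hopenmap : IsOpenMap e := Topology.IsOpenEmbedding.isOpenMap ⟨h.embedding, hopen⟩
    have heq : ({e x} : Set X) = ⋂ n : ℕ, e '' Metric.ball x (1 / (n + 1)) := by
      apply Set.Subset.antisymm
      · rintro z hz
        rw [Set.mem_singleton_iff] at hz; subst hz
        exact Set.mem_iInter.mpr fun n => ⟨x, Metric.mem_ball_self (by positivity), rfl⟩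
      · intro z hz
        rw [Set.mem_iInter] at hz
        obtain ⟨y, hy0, hyz⟩ := hz 0
        rw [Set.mem_singleton_iff]
        have hyall : ∀ n : ℕ, dist y x < 1 / (n + 1) := by
          intro n
          obtain ⟨w, hw, hwz⟩ := hz n
          have : w = y := h.embedding.injective (hwz.trans hyz.symm)
          subst this
          exact hw
        have hd0 : dist y x ≤ 0 := by
          by_contra hd
          push_neg at hd
          obtain ⟨n, hn⟩ := exists_nat_one_div_lt hd
          exact absurd (hyall n) (not_lt.mpr hn.le)
        have : y = x := by
          rw [← dist_le_zero]; exact hd0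
        rw [← hyz, this]
    rw [heq]
    exact IsGδ.iInter fun n => (hopenmap _ Metric.isOpen_ball).isGδ
  · intro hGδ
    by_contra hp
    have hMne : Nonempty M := by
      by_contra hM
      rw [not_nonempty_iff] at hM
      have h0 : Set.range e = ∅ := Set.range_eq_empty e
      have hd := h.dense p
      rw [h0, closure_empty] at hd
      exact hd
    obtain ⟨o⟩ := hMne
    haveI hcg : (𝓝 p).IsCountablyGenerated := countable_basis_of_isGδ_singleton hGδ
    haveI : (𝓝[Set.range e] p).NeBot := mem_closure_iff_nhdsWithin_neBot.mp (h.dense p)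
    obtain ⟨u, hu⟩ := exists_seq_tendsto (𝓝[Set.range e] p)
    have humem : ∀ᶠ n in atTop, u n ∈ Set.range e := hu.eventually eventually_mem_nhdsWithin
    obtain ⟨N, hN⟩ := eventually_atTop.mp humem
    have hex0 : ∀ n : ℕ, ∃ m : M, e m = u (n + N) := fun n => hN (n + N) (Nat.le_add_left N n)
    choose x hx using hex0
    have hex : Tendsto (fun n => e (x n)) atTop (𝓝 p) := by
      have h1 : Tendsto (fun n : ℕ => u (n + N)) atTop (𝓝[Set.range e] p) :=
        hu.comp (tendsto_add_atTop_nat N)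
      have h2 := h1.mono_right nhdsWithin_le_nhds
      have h3 : (fun n : ℕ => e (x n)) = fun n : ℕ => u (n + N) := funext fun n => hx n
      rw [h3]
      exact h2
    have hdist : Tendsto (fun n => dist o (x n)) atTop atTop := by
      rw [Filter.tendsto_atTop]
      intro B
      have hCcomp : IsCompact (e '' Metric.closedBall o |B|) :=
        (isCompact_closedBall o |B|).image h.embedding.continuous
      have hpC : p ∉ e '' Metric.closedBall o |B| := fun hmem =>
        hp (Set.image_subset_range _ _ hmem)
      have hCc : (e '' Metric.closedBall o |B|)ᶜ ∈ 𝓝 p :=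
        hCcomp.isClosed.isOpen_compl.mem_nhds hpC
      filter_upwards [hex hCc] with n hn
      by_contra hB
      push_neg at hB
      exact hn ⟨x n, by
        rw [Metric.mem_closedBall, dist_comm]
        exact le_trans hB.le (le_abs_self B), rfl⟩
    have pick : ∀ (N' : ℕ) (B : ℝ), ∃ m : ℕ, N' < m ∧ B ≤ dist o (x m) := by
      intro N' B
      obtain ⟨m, hm1, hm2⟩ := ((hdist.eventually_ge_atTop B).and (eventually_gt_atTop N')).exists
      exact ⟨m, hm2, hm1⟩
    choose pf hpf1 hpf2 using pick
    let nseq : ℕ → ℕ := fun k =>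
      Nat.rec (pf 0 2) (fun _ ih => pf ih (4 * dist o (x ih))) k
    set y : ℕ → M := fun k => x (nseq k) with hy
    set ρ : ℕ → ℝ := fun k => dist o (y k) with hρ
    have hρ0 : 2 ≤ ρ 0 := hpf2 0 2
    have hρs : ∀ k, 4 * ρ k ≤ ρ (k + 1) := fun k => hpf2 _ _
    have hmono : StrictMono nseq := strictMono_nat_of_lt_succ fun k => hpf1 _ _
    have hρ2 : ∀ k, 2 ≤ ρ k := by
      intro k
      induction k with
      | zero => exact hρ0
      | succ k ih => nlinarith [hρs k]
    have hρmono : Monotone ρ := monotone_nat_of_le_succ fun k => by nlinarith [hρs k, hρ2 k]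
    set A : Set ℝ := Set.range (fun k : ℕ => ρ (2 * k)) with hA
    haveI hAne : Nonempty A := ⟨⟨ρ 0, ⟨0, by norm_num⟩⟩⟩
    set f : M → ℝ := fun z =>
      min (Real.sqrt (max 1 (dist o z))) (infDist (max 1 (dist o z)) A)
        / Real.sqrt (max 1 (dist o z)) with hf
    have hmax : ∀ k, max 1 (dist o (y k)) = ρ k := fun k =>
      max_eq_right (by linarith [hρ2 k])
    have hsqrtpos : ∀ k, 0 < Real.sqrt (ρ k) := fun k => Real.sqrt_pos.mpr (by linarith [hρ2 k])
    have hfeven : ∀ k, f (y (2 * k)) = 0 := by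
      intro k
      have h1 : infDist (ρ (2 * k)) A = 0 := infDist_zero_of_mem ⟨k, rfl⟩
      show min (Real.sqrt (max 1 (dist o (y (2 * k)))))
          (infDist (max 1 (dist o (y (2 * k)))) A)
          / Real.sqrt (max 1 (dist o (y (2 * k)))) = 0
      rw [hmax (2 * k), h1, min_eq_right (Real.sqrt_nonneg _), zero_div]
    have hfodd : ∀ k, f (y (2 * k + 1)) = 1 := by
      intro k
      have hsle : Real.sqrt (ρ (2 * k + 1)) ≤ infDist (ρ (2 * k + 1)) A := by
        rw [infDist_eq_iInf]
        apply le_ciInf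
        rintro ⟨_, i, rfl⟩
        rw [Real.dist_eq]
        rcases le_or_gt i k with hik | hik
        · have h1 : ρ (2 * i) ≤ ρ (2 * k) := hρmono (by omega)
          have h2 : 4 * ρ (2 * k) ≤ ρ (2 * k + 1) := hρs _
          have h3 : Real.sqrt (ρ (2 * k + 1)) ≤ 3 / 4 * ρ (2 * k + 1) := by
            apply sqrt_le_of_sq (by nlinarith [hρ2 (2 * k + 1)])
            nlinarith [hρ2 (2 * k + 1)]
          have habs : ρ (2 * k + 1) - ρ (2 * i) ≤ |ρ (2 * k + 1) - ρ (2 * i)| := le_abs_self _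
          nlinarith [hρ2 (2 * i)]
        · have h1 : ρ (2 * (k + 1)) ≤ ρ (2 * i) := hρmono (show 2 * (k + 1) ≤ 2 * i by omega)
          have h2 : 4 * ρ (2 * k + 1) ≤ ρ (2 * k + 1 + 1) := hρs (2 * k + 1)
          have h2' : (2 : ℕ) * k + 1 + 1 = 2 * (k + 1) := by ring
          rw [h2'] at h2
          have h3 : Real.sqrt (ρ (2 * k + 1)) ≤ ρ (2 * k + 1) := by
            apply sqrt_le_of_sq (by linarith [hρ2 (2 * k + 1)])
            nlinarith [hρ2 (2 * k + 1)]
          have habs : -(ρ (2 * k + 1) - ρ (2 * i)) ≤ |ρ (2 * k + 1) - ρ (2 * i)| := neg_le_abs _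
          nlinarith [hρ2 (2 * k + 1)]
      show min (Real.sqrt (max 1 (dist o (y (2 * k + 1)))))
          (infDist (max 1 (dist o (y (2 * k + 1)))) A)
          / Real.sqrt (max 1 (dist o (y (2 * k + 1)))) = 1
      rw [hmax (2 * k + 1), min_eq_left hsle, div_self (ne_of_gt (hsqrtpos (2 * k + 1)))]
    have hcontmax : Continuous fun z : M => max 1 (dist o z) :=
      continuous_const.max (continuous_const.dist continuous_id)
    have hsqrtne : ∀ z : M, Real.sqrt (max 1 (dist o z)) ≠ 0 := fun z =>
      ne_of_gt (Real.sqrt_pos.mpr (lt_of_lt_of_le one_pos (le_max_left _ _)))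
    have hcont : Continuous fun z : M => ((f z : ℝ) : ℂ) := by
      apply Complex.continuous_ofReal.comp
      apply Continuous.div
      · exact Continuous.min (Real.continuous_sqrt.comp hcontmax)
          ((continuous_infDist_pt A).comp hcontmax)
      · exact Real.continuous_sqrt.comp hcontmax
      · exact hsqrtne
    have hbound : ∀ z : M, ‖((f z : ℝ) : ℂ)‖ ≤ 1 := by
      intro z
      rw [Complex.norm_real, Real.norm_eq_abs,
        abs_of_nonneg (div_nonneg (le_min (Real.sqrt_nonneg _) infDist_nonneg)
          (Real.sqrt_nonneg _))]
      exact div_le_one_of_le₀ (min_le_left _ _) (Real.sqrt_nonneg _)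
    set F : BoundedContinuousFunction M ℂ :=
      BoundedContinuousFunction.ofNormedAddCommGroup _ hcont 1 hbound with hF
    have hFcoe : ∀ z : M, F z = ((f z : ℝ) : ℂ) := fun z => rfl
    have hFH : IsHigsonFunction F := by
      have : (F : M → ℂ) = fun z : M =>
          ((min (Real.sqrt (max 1 (dist o z))) (infDist (max 1 (dist o z)) A)
            / Real.sqrt (max 1 (dist o z)) : ℝ) : ℂ) := rfl
      rw [this]
      exact isHigson_radial o A
    obtain ⟨g, hg⟩ := (h.higson F).mpr hFH
    have hgy : Tendsto (fun k => g (e (y k))) atTop (𝓝 (g p)) :=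
      (g.continuous.tendsto p).comp (hex.comp hmono.tendsto_atTop)
    have heven : StrictMono fun k : ℕ => 2 * k := strictMono_nat_of_lt_succ fun k => by omega
    have hodd : StrictMono fun k : ℕ => 2 * k + 1 := strictMono_nat_of_lt_succ fun k => by omega
    have hg0 : g p = 0 := by
      have h1 : Tendsto (fun k => g (e (y (2 * k)))) atTop (𝓝 (g p)) :=
        hgy.comp heven.tendsto_atTop
      have h2 : (fun k => g (e (y (2 * k)))) = fun _ => (0 : ℂ) := funext fun k => by
        rw [hg (y (2 * k)), hFcoe, hfeven k, Complex.ofReal_zero]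
      rw [h2] at h1
      exact (tendsto_nhds_unique h1 tendsto_const_nhds)
    have hg1 : g p = 1 := by
      have h1 : Tendsto (fun k => g (e (y (2 * k + 1)))) atTop (𝓝 (g p)) :=
        hgy.comp hodd.tendsto_atTop
      have h2 : (fun k => g (e (y (2 * k + 1)))) = fun _ => (1 : ℂ) := funext fun k => by
        rw [hg (y (2 * k + 1)), hFcoe, hfodd k, Complex.ofReal_one]
      rw [h2] at h1
      exact (tendsto_nhds_unique h1 tendsto_const_nhds)
    rw [hg0] at hg1
    exact absurd hg1 (by norm_num)
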